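/- arXiv:1808.08574 — 2 statements merged into one kernel-verified Lean document; each statement's English description precedes it below -/
import Mathlib

section
/- Let T ∈ (0,∞) and let φ : {(t,s) : 0 ≤ s ≤ t ≤ T} → [0,∞) be Borel measurable with ∫_s^T φ(r,s) dr < ∞ for all s ∈ [0,T]. Suppose there exist constants A, B ∈ [0,∞) and α, β ∈ (0,∞) such that φ(t,s) ≤ A (t-s)^{α-1} + B ∫_s^t (t-r)^{β-1} φ(r,s) dr for all 0 ≤ s ≤ t ≤ T. Then there exists a constant C = C(B,T,α,β) ∈ [0,∞) such that φ(t,s) ≤ C A (t-s)^{α-1} for all 0 ≤ s ≤ t ≤ T. -/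
open MeasureTheory Set

namespace GGron


lemma lint_ker_left {γ a b : ℝ} (hγ : 0 < γ) (hab : a ≤ b) :
    ∫⁻ r in Set.Ioc a b, ENNReal.ofReal ((r - a) ^ (γ - 1)) = ENNReal.ofReal ((b - a) ^ γ / γ) := by
  have hint : IntervalIntegrable (fun r : ℝ => (r - a) ^ (γ - 1)) volume a b := by
    have h0 : IntervalIntegrable (fun x : ℝ => x ^ (γ - 1)) volume 0 (b - a) :=
      intervalIntegral.intervalIntegrable_rpow' (by linarith)
    simpa using h0.comp_sub_right a
  have hval : (∫ r in a..b, (r - a) ^ (γ - 1)) = (b - a) ^ γ / γ := by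
    rw [intervalIntegral.integral_comp_sub_right (fun x : ℝ => x ^ (γ - 1)) a]
    rw [integral_rpow (Or.inl (by linarith))]
    rw [sub_self, Real.zero_rpow (by linarith : γ - 1 + 1 ≠ 0)]
    ring_nf
  rw [intervalIntegral.integral_of_le hab] at hval
  rw [← ofReal_integral_eq_lintegral_ofReal
    ((intervalIntegrable_iff_integrableOn_Ioc_of_le hab).mp hint)
    ((ae_restrict_iff' measurableSet_Ioc).mpr (ae_of_all _ fun r hr =>
      Real.rpow_nonneg (by linarith [hr.1]) _)), hval]

lemma lint_ker_right {γ a b : ℝ} (hγ : 0 < γ) (hab : a ≤ b) :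
    ∫⁻ r in Set.Ioc a b, ENNReal.ofReal ((b - r) ^ (γ - 1)) = ENNReal.ofReal ((b - a) ^ γ / γ) := by
  have hint : IntervalIntegrable (fun r : ℝ => (b - r) ^ (γ - 1)) volume a b := by
    have h0 : IntervalIntegrable (fun x : ℝ => x ^ (γ - 1)) volume (b - a) 0 :=
      (intervalIntegral.intervalIntegrable_rpow' (by linarith)).symm
    simpa using h0.comp_sub_left b
  have hval : (∫ r in a..b, (b - r) ^ (γ - 1)) = (b - a) ^ γ / γ := by
    rw [intervalIntegral.integral_comp_sub_left (fun x : ℝ => x ^ (γ - 1)) b]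
    rw [integral_rpow (Or.inl (by linarith))]
    rw [sub_self, Real.zero_rpow (by linarith : γ - 1 + 1 ≠ 0)]
    ring_nf
  rw [intervalIntegral.integral_of_le hab] at hval
  rw [← ofReal_integral_eq_lintegral_ofReal
    ((intervalIntegrable_iff_integrableOn_Ioc_of_le hab).mp hint)
    ((ae_restrict_iff' measurableSet_Ioc).mpr (ae_of_all _ fun r hr =>
      Real.rpow_nonneg (by linarith [hr.2]) _)), hval]

lemma half_rpow_le {e d y : ℝ} (hd : 0 < d) (h1 : d / 2 ≤ y) (h2 : y ≤ d) :
    y ^ e ≤ max 1 (2 ^ (-e)) * d ^ e := by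
  rcases le_or_gt 0 e with he | he
  · calc y ^ e ≤ d ^ e := Real.rpow_le_rpow (by linarith) h2 he
      _ ≤ max 1 (2 ^ (-e)) * d ^ e := by
        nlinarith [Real.rpow_nonneg hd.le e, le_max_left (1:ℝ) (2 ^ (-e))]
  · have hy : (0:ℝ) < d / 2 := by linarith
    calc y ^ e ≤ (d / 2) ^ e := Real.rpow_le_rpow_of_nonpos hy h1 he.le
      _ = 2 ^ (-e) * d ^ e := by
        rw [div_eq_mul_inv, Real.mul_rpow hd.le (by norm_num), ← Real.rpow_neg_one (2:ℝ),
          ← Real.rpow_mul (by norm_num : (0:ℝ) ≤ 2), neg_one_mul]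
        ring
      _ ≤ max 1 (2 ^ (-e)) * d ^ e := by
        have := Real.rpow_nonneg hd.le e
        nlinarith [le_max_right (1:ℝ) (2 ^ (-e))]

lemma ofReal_setIntegral_le {s : Set ℝ} {f : ℝ → ℝ} (hs : MeasurableSet s)
    (hf : ∀ x ∈ s, 0 ≤ f x) :
    ENNReal.ofReal (∫ x in s, f x) ≤ ∫⁻ x in s, ENNReal.ofReal (f x) := by
  calc ENNReal.ofReal (∫ x in s, f x) ≤ (‖∫ x in s, f x‖₊ : ENNReal) :=
        Real.ofReal_le_enorm _
    _ ≤ ∫⁻ x in s, (‖f x‖₊ : ENNReal) := enorm_integral_le_lintegral_enorm _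
    _ = ∫⁻ x in s, ENNReal.ofReal (f x) := by
        refine lintegral_congr_ae ((ae_restrict_iff' hs).mpr (ae_of_all _ fun x hx => ?_))
        simp only []
        exact Real.enorm_eq_ofReal (hf x hx)



noncomputable def cc (p q : ℝ) : ℝ := max 1 (2 ^ (1 - q)) / p + max 1 (2 ^ (1 - p)) / q

lemma max_nonneg' (x : ℝ) : (0:ℝ) ≤ max 1 x := le_trans zero_le_one (le_max_left _ _)

lemma cc_nonneg {p q : ℝ} (hp : 0 < p) (hq : 0 < q) : 0 ≤ cc p q := by
  have h1 := max_nonneg' (2 ^ (1 - q) : ℝ)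
  have h2 := max_nonneg' (2 ^ (1 - p) : ℝ)
  unfold cc; positivity

lemma meas_rpow_const (c : ℝ) : Measurable fun x : ℝ => x ^ c := by measurability

lemma meas_ker_right (p b : ℝ) :
    Measurable fun r : ℝ => ENNReal.ofReal ((b - r) ^ (p - 1)) :=
  ((meas_rpow_const (p - 1)).comp (measurable_const.sub measurable_id)).ennreal_ofReal

lemma meas_ker_left (q a : ℝ) :
    Measurable fun r : ℝ => ENNReal.ofReal ((r - a) ^ (q - 1)) :=
  ((meas_rpow_const (q - 1)).comp (measurable_id.sub measurable_const)).ennreal_ofReal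

/-- crude beta-type convolution bound -/
lemma ker_conv_le {p q a b : ℝ} (hp : 0 < p) (hq : 0 < q) (hab : a < b) :
    ∫⁻ r in Set.Ioc a b,
        ENNReal.ofReal ((b - r) ^ (p - 1)) * ENNReal.ofReal ((r - a) ^ (q - 1))
      ≤ ENNReal.ofReal (cc p q * (b - a) ^ (p + q - 1)) := by
  set m : ℝ := (a + b) / 2 with hm
  have ham : a ≤ m := by simp only [hm]; linarith
  have hmb : m ≤ b := by simp only [hm]; linarith
  have hd : 0 < b - a := by linarith
  have hsplit : Set.Ioc a b = Set.Ioc a m ∪ Set.Ioc m b := (Set.Ioc_union_Ioc_eq_Ioc ham hmb).symm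
  have key2 : (b - a) ^ (p - 1) * (b - a) ^ q = (b - a) ^ (p + q - 1) := by
    rw [← Real.rpow_add hd]; ring_nf
  have key2' : (b - a) ^ (q - 1) * (b - a) ^ p = (b - a) ^ (p + q - 1) := by
    rw [← Real.rpow_add hd]; ring_nf
  rw [hsplit, lintegral_union measurableSet_Ioc (Set.Ioc_disjoint_Ioc_of_le le_rfl)]
  have piece1 : ∫⁻ r in Set.Ioc a m,
      ENNReal.ofReal ((b - r) ^ (p - 1)) * ENNReal.ofReal ((r - a) ^ (q - 1))
      ≤ ENNReal.ofReal (max 1 (2 ^ (1 - p)) / q * (b - a) ^ (p + q - 1)) := by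
    calc ∫⁻ r in Set.Ioc a m,
          ENNReal.ofReal ((b - r) ^ (p - 1)) * ENNReal.ofReal ((r - a) ^ (q - 1))
        ≤ ∫⁻ r in Set.Ioc a m, ENNReal.ofReal (max 1 (2 ^ (1 - p)) * (b - a) ^ (p - 1)) *
            ENNReal.ofReal ((r - a) ^ (q - 1)) := by
          refine setLIntegral_mono (measurable_const.mul (meas_ker_left q a)) ?_
          intro r hr
          refine mul_le_mul_left (ENNReal.ofReal_le_ofReal ?_) _
          have he : (1 : ℝ) - p = -(p - 1) := by ring
          rw [he]
          exact half_rpow_le hd (by simp only [hm] at hr ⊢; obtain ⟨h1, h2⟩ := hr; linarith)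
            (by obtain ⟨h1, h2⟩ := hr; linarith)
      _ = ENNReal.ofReal (max 1 (2 ^ (1 - p)) * (b - a) ^ (p - 1)) *
            ENNReal.ofReal ((m - a) ^ q / q) := by
          rw [lintegral_const_mul _ (meas_ker_left q a), lint_ker_left hq ham]
      _ ≤ ENNReal.ofReal (max 1 (2 ^ (1 - p)) / q * (b - a) ^ (p + q - 1)) := by
          rw [← ENNReal.ofReal_mul (by have := max_nonneg' (2 ^ (1 - p) : ℝ); positivity)]
          apply ENNReal.ofReal_le_ofReal
          have h1 : (m - a) ^ q ≤ (b - a) ^ q :=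
            Real.rpow_le_rpow (by linarith) (by linarith) hq.le
          have hX := max_nonneg' (2 ^ (1 - p) : ℝ)
          calc max 1 (2 ^ (1 - p)) * (b - a) ^ (p - 1) * ((m - a) ^ q / q)
              ≤ max 1 (2 ^ (1 - p)) * (b - a) ^ (p - 1) * ((b - a) ^ q / q) := by
                have h0 : (0:ℝ) ≤ max 1 (2 ^ (1 - p)) * (b - a) ^ (p - 1) :=
                  mul_nonneg (max_nonneg' _) (Real.rpow_nonneg hd.le _)
                exact mul_le_mul_of_nonneg_left (by gcongr) h0
            _ = max 1 (2 ^ (1 - p)) / q * ((b - a) ^ (p - 1) * (b - a) ^ q) := by ring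
            _ = max 1 (2 ^ (1 - p)) / q * (b - a) ^ (p + q - 1) := by rw [key2]
  have piece2 : ∫⁻ r in Set.Ioc m b,
      ENNReal.ofReal ((b - r) ^ (p - 1)) * ENNReal.ofReal ((r - a) ^ (q - 1))
      ≤ ENNReal.ofReal (max 1 (2 ^ (1 - q)) / p * (b - a) ^ (p + q - 1)) := by
    calc ∫⁻ r in Set.Ioc m b,
          ENNReal.ofReal ((b - r) ^ (p - 1)) * ENNReal.ofReal ((r - a) ^ (q - 1))
        ≤ ∫⁻ r in Set.Ioc m b, ENNReal.ofReal ((b - r) ^ (p - 1)) *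
            ENNReal.ofReal (max 1 (2 ^ (1 - q)) * (b - a) ^ (q - 1)) := by
          refine setLIntegral_mono ((meas_ker_right p b).mul measurable_const) ?_
          intro r hr
          refine mul_le_mul_right (ENNReal.ofReal_le_ofReal ?_) _
          have he : (1 : ℝ) - q = -(q - 1) := by ring
          rw [he]
          exact half_rpow_le hd (by simp only [hm] at hr ⊢; obtain ⟨h1, h2⟩ := hr; linarith)
            (by obtain ⟨h1, h2⟩ := hr; linarith)
      _ = ENNReal.ofReal ((b - m) ^ p / p) *
            ENNReal.ofReal (max 1 (2 ^ (1 - q)) * (b - a) ^ (q - 1)) := by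
          rw [lintegral_mul_const _ (meas_ker_right p b), lint_ker_right hp hmb]
      _ ≤ ENNReal.ofReal (max 1 (2 ^ (1 - q)) / p * (b - a) ^ (p + q - 1)) := by
          rw [← ENNReal.ofReal_mul (div_nonneg (Real.rpow_nonneg (by linarith) _) hp.le)]
          apply ENNReal.ofReal_le_ofReal
          have h1 : (b - m) ^ p ≤ (b - a) ^ p :=
            Real.rpow_le_rpow (by linarith) (by linarith) hp.le
          have hX := max_nonneg' (2 ^ (1 - q) : ℝ)
          calc (b - m) ^ p / p * (max 1 (2 ^ (1 - q)) * (b - a) ^ (q - 1))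
              ≤ (b - a) ^ p / p * (max 1 (2 ^ (1 - q)) * (b - a) ^ (q - 1)) := by
                have h0 : (0:ℝ) ≤ max 1 (2 ^ (1 - q)) * (b - a) ^ (q - 1) :=
                  mul_nonneg (max_nonneg' _) (Real.rpow_nonneg hd.le _)
                exact mul_le_mul_of_nonneg_right (by gcongr) h0
            _ = max 1 (2 ^ (1 - q)) / p * ((b - a) ^ (q - 1) * (b - a) ^ p) := by ring
            _ = max 1 (2 ^ (1 - q)) / p * (b - a) ^ (p + q - 1) := by rw [key2']
  calc _ ≤ ENNReal.ofReal (max 1 (2 ^ (1 - p)) / q * (b - a) ^ (p + q - 1)) +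
        ENNReal.ofReal (max 1 (2 ^ (1 - q)) / p * (b - a) ^ (p + q - 1)) := add_le_add piece1 piece2
    _ = ENNReal.ofReal (cc p q * (b - a) ^ (p + q - 1)) := by
        rw [← ENNReal.ofReal_add (by have := max_nonneg' (2 ^ (1 - p) : ℝ); positivity)
          (by have := max_nonneg' (2 ^ (1 - q) : ℝ); positivity)]
        unfold cc; ring_nf



/-- Tonelli swap for triangle regions. -/
lemma lint_swap {a b : ℝ} {K : ℝ → ℝ → ENNReal} (hK : Measurable (Function.uncurry K))
    {Φ : ℝ → ENNReal} (hΦ : Measurable Φ) :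
    ∫⁻ r in Set.Ioc a b, ∫⁻ u in Set.Ioc a r, K r u * Φ u
      = ∫⁻ u in Set.Ioc a b, (∫⁻ r in Set.Ioc u b, K r u) * Φ u := by
  have hIoo : ∀ (c d : ℝ) (f : ℝ → ENNReal),
      ∫⁻ x in Set.Ioc c d, f x = ∫⁻ x in Set.Ioo c d, f x := fun c d f => by
    rw [Measure.restrict_congr_set Ioo_ae_eq_Ioc]
  set S : Set (ℝ × ℝ) := {p : ℝ × ℝ | a < p.2 ∧ p.2 < p.1 ∧ p.1 < b} with hS
  have hSmeas : MeasurableSet S := by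
    apply MeasurableSet.inter
    · exact measurableSet_lt measurable_const measurable_snd
    · exact (measurableSet_lt measurable_snd measurable_fst).inter
        (measurableSet_lt measurable_fst measurable_const)
  set F : ℝ × ℝ → ENNReal := S.indicator (fun p => K p.1 p.2 * Φ p.2) with hF
  have hFmeas : Measurable F :=
    Measurable.indicator (hK.mul (hΦ.comp measurable_snd)) hSmeas
  have hL : ∫⁻ r in Set.Ioc a b, ∫⁻ u in Set.Ioc a r, K r u * Φ u
      = ∫⁻ r, ∫⁻ u, F (r, u) := by
    rw [hIoo a b, ← lintegral_indicator measurableSet_Ioo]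
    apply lintegral_congr
    intro r
    rcases em (r ∈ Set.Ioo a b) with hr | hr
    · rw [Set.indicator_of_mem hr, hIoo a r, ← lintegral_indicator measurableSet_Ioo]
      apply lintegral_congr
      intro u
      rcases em (u ∈ Set.Ioo a r) with hu | hu
      · have hmem : (r, u) ∈ S := ⟨hu.1, hu.2, hr.2⟩
        rw [Set.indicator_of_mem hu, hF, Set.indicator_of_mem hmem]
      · rw [Set.indicator_of_notMem hu, hF,
          Set.indicator_of_notMem (fun hmem => hu ⟨hmem.1, hmem.2.1⟩)]
    · rw [Set.indicator_of_notMem hr]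
      have hz : ∀ u : ℝ, F (r, u) = 0 := fun u =>
        Set.indicator_of_notMem (fun hmem => hr ⟨lt_trans hmem.1 hmem.2.1, hmem.2.2⟩) _
      simp only [hz, lintegral_const, zero_mul]
  have hR : ∫⁻ u in Set.Ioc a b, (∫⁻ r in Set.Ioc u b, K r u) * Φ u
      = ∫⁻ u, ∫⁻ r, F (r, u) := by
    rw [hIoo a b, ← lintegral_indicator measurableSet_Ioo]
    apply lintegral_congr
    intro u
    rcases em (u ∈ Set.Ioo a b) with hu | hu
    · rw [Set.indicator_of_mem hu]
      have hKu : Measurable fun r => K r u :=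
        hK.comp (measurable_id.prodMk measurable_const)
      have : ∀ r : ℝ, F (r, u) = (Set.Ioo u b).indicator (fun r => K r u * Φ u) r := by
        intro r
        rcases em (r ∈ Set.Ioo u b) with hr | hr
        · have hmem : (r, u) ∈ S := ⟨hu.1, hr.1, hr.2⟩
          rw [Set.indicator_of_mem hr, hF, Set.indicator_of_mem hmem]
        · rw [Set.indicator_of_notMem hr, hF,
            Set.indicator_of_notMem (fun hmem => hr ⟨hmem.2.1, hmem.2.2⟩)]
      simp only [this]
      rw [lintegral_indicator measurableSet_Ioo,
        lintegral_mul_const _ hKu, hIoo u b]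
    · rw [Set.indicator_of_notMem hu]
      have hz : ∀ r : ℝ, F (r, u) = 0 := by
        intro r
        apply Set.indicator_of_notMem
        intro hmem
        rcases hmem with ⟨h1, h2, h3⟩
        exact hu ⟨h1, lt_trans h2 h3⟩
      simp only [hz, lintegral_const, zero_mul]
  rw [hL, hR]
  exact lintegral_lintegral_swap hFmeas.aemeasurable

lemma meas_ker_sub_left (c b : ℝ) : Measurable fun r : ℝ => ENNReal.ofReal ((b - r) ^ c) :=
  ((meas_rpow_const c).comp (measurable_const.sub measurable_id)).ennreal_ofReal

lemma meas_ker_fst (c b : ℝ) : Measurable fun p : ℝ × ℝ => ENNReal.ofReal ((b - p.1) ^ c) :=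
  ((meas_rpow_const c).comp (measurable_const.sub measurable_fst)).ennreal_ofReal


section Main

variable {T B α β : ℝ}


/-- uniform bound on the `cc (m+1) α` constants -/
lemma cc_succ_le (hα : 0 < α) (m : ℕ) :
    cc ((m : ℝ) + 1) α ≤ max 1 (2 ^ (1 - α)) + 1 / α := by
  have h1 : max 1 (2 ^ (1 - α)) / ((m : ℝ) + 1) ≤ max 1 (2 ^ (1 - α)) := by
    rw [div_le_iff₀ (by positivity)]
    nlinarith [max_nonneg' (2 ^ (1 - α) : ℝ), Nat.cast_nonneg (α := ℝ) m]
  have h2 : max 1 ((2:ℝ) ^ (1 - (((m : ℝ)) + 1))) ≤ 1 := by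
    apply max_le le_rfl
    apply Real.rpow_le_one_of_one_le_of_nonpos one_le_two
    have := Nat.cast_nonneg (α := ℝ) m
    linarith
  have h3 : max 1 ((2:ℝ) ^ (1 - (((m : ℝ)) + 1))) / α ≤ 1 / α :=
    (div_le_div_iff_of_pos_right hα).mpr h2
  calc cc ((m : ℝ) + 1) α
      = max 1 ((2:ℝ) ^ (1 - α)) / ((m : ℝ) + 1) + max 1 ((2:ℝ) ^ (1 - ((m : ℝ) + 1))) / α := rfl
    _ ≤ max 1 (2 ^ (1 - α)) + 1 / α := add_le_add h1 h3

lemma stageB {C1 D2 A s : ℝ} (hT : 0 < T) (hα : 0 < α) (hC1 : 0 ≤ C1) (hD2 : 0 ≤ D2)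
    (hA : 0 ≤ A) {Φ : ℝ → ENNReal} (hΦmeas : Measurable Φ) (hs : 0 ≤ s)
    (hfin : (∫⁻ u in Set.Ioc s T, Φ u) ≠ ⊤)
    (hbase : ∀ t, s < t → t ≤ T →
      Φ t ≤ ENNReal.ofReal (C1 * A) * ENNReal.ofReal ((t - s) ^ (α - 1))
        + ENNReal.ofReal D2 * ∫⁻ u in Set.Ioc s t, Φ u) :
    ∀ t, s < t → t ≤ T →
      Φ t ≤ ENNReal.ofReal
          ((C1 * (1 + (max 1 (2 ^ (1 - α)) + 1 / α) * (D2 * T) * Real.exp (D2 * T))) * A)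
        * ENNReal.ofReal ((t - s) ^ (α - 1)) := by
  set Kα : ℝ := max 1 (2 ^ (1 - α)) + 1 / α with hKα
  have hKα0 : 0 ≤ Kα := by
    have := max_nonneg' (2 ^ (1 - α) : ℝ)
    positivity
  set E : ℕ → ℝ := fun m =>
    C1 * (1 + Kα * ∑ j ∈ Finset.range m, (D2 * T) ^ (j + 1) / (j.factorial : ℝ)) with hE
  have hsum0 : ∀ m : ℕ, (0:ℝ) ≤ ∑ j ∈ Finset.range m, (D2 * T) ^ (j + 1) / (j.factorial : ℝ) :=
    fun m => Finset.sum_nonneg fun j _ => by positivity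
  have hE0 : ∀ m, 0 ≤ E m := fun m => by
    have := hsum0 m
    simp only [hE]
    positivity
  have hEle : ∀ m, E m ≤ C1 * (1 + Kα * (D2 * T) * Real.exp (D2 * T)) := by
    intro m
    apply mul_le_mul_of_nonneg_left _ hC1
    rw [mul_assoc]
    apply add_le_add_right
    apply mul_le_mul_of_nonneg_left _ hKα0
    have hsplit : ∑ j ∈ Finset.range m, (D2 * T) ^ (j + 1) / (j.factorial : ℝ)
        = (D2 * T) * ∑ j ∈ Finset.range m, (D2 * T) ^ j / (j.factorial : ℝ) := by
      rw [Finset.mul_sum]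
      apply Finset.sum_congr rfl
      intro j _
      rw [pow_succ']
      ring
    rw [hsplit]
    apply mul_le_mul_of_nonneg_left _ (by positivity)
    exact Real.sum_le_exp_of_nonneg (by positivity) m
  -- the main iteration
  have key : ∀ m : ℕ, ∀ t, s < t → t ≤ T →
      Φ t ≤ ENNReal.ofReal (E m * A) * ENNReal.ofReal ((t - s) ^ (α - 1))
        + ENNReal.ofReal (D2 ^ (m + 1) / (m.factorial : ℝ)) *
            ∫⁻ u in Set.Ioc s t, ENNReal.ofReal ((t - u) ^ (m : ℝ)) * Φ u := by
    intro m
    induction m with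
    | zero =>
      intro t h1 h2
      have hb := hbase t h1 h2
      simp only [hE, Finset.range_zero, Finset.sum_empty, mul_zero, add_zero, mul_one,
        zero_add, pow_one, Nat.factorial_zero, Nat.cast_one, div_one, Nat.cast_zero,
        Real.rpow_zero, ENNReal.ofReal_one, one_mul]
      exact hb
    | succ m ih =>
      intro t h1 h2
      have hd : 0 < t - s := by linarith
      have hm1 : (0:ℝ) < (m : ℝ) + 1 := by positivity
      -- bound the remainder integral of the IH
      have hR : (∫⁻ u in Set.Ioc s t, ENNReal.ofReal ((t - u) ^ (m : ℝ)) * Φ u)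
          ≤ ENNReal.ofReal (C1 * A * (Kα * T ^ ((m : ℝ) + 1)))
              * ENNReal.ofReal ((t - s) ^ (α - 1))
            + ENNReal.ofReal (D2 / ((m : ℝ) + 1)) *
                ∫⁻ u in Set.Ioc s t, ENNReal.ofReal ((t - u) ^ ((m : ℝ) + 1)) * Φ u := by
        have step1 : (∫⁻ u in Set.Ioc s t, ENNReal.ofReal ((t - u) ^ (m : ℝ)) * Φ u)
            ≤ ∫⁻ u in Set.Ioc s t,
                (ENNReal.ofReal ((t - u) ^ (m : ℝ)) *
                  (ENNReal.ofReal (C1 * A) * ENNReal.ofReal ((u - s) ^ (α - 1)))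
                + ENNReal.ofReal ((t - u) ^ (m : ℝ)) *
                  (ENNReal.ofReal D2 * ∫⁻ r in Set.Ioc s u, Φ r)) := by
          refine setLIntegral_mono' measurableSet_Ioc ?_
          intro u hu
          rw [← mul_add]
          exact mul_le_mul_right (hbase u hu.1 (le_trans hu.2 h2)) _
        refine le_trans step1 ?_
        rw [lintegral_add_left (f := fun u : ℝ => ENNReal.ofReal ((t - u) ^ (m : ℝ)) *
            (ENNReal.ofReal (C1 * A) * ENNReal.ofReal ((u - s) ^ (α - 1))))
          ((meas_ker_sub_left (m : ℝ) t).mul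
          (measurable_const.mul (meas_ker_left α s)))]
        apply add_le_add
        · -- S1
          have e1 : ∀ u : ℝ, ENNReal.ofReal ((t - u) ^ (m : ℝ)) *
              (ENNReal.ofReal (C1 * A) * ENNReal.ofReal ((u - s) ^ (α - 1)))
              = ENNReal.ofReal (C1 * A) * (ENNReal.ofReal ((t - u) ^ ((((m : ℝ) + 1)) - 1)) *
                  ENNReal.ofReal ((u - s) ^ (α - 1))) := by
            intro u
            rw [show ((m : ℝ) + 1) - 1 = (m : ℝ) by ring]
            ring
          simp only [e1]
          rw [lintegral_const_mul' _ _ ENNReal.ofReal_ne_top]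
          calc ENNReal.ofReal (C1 * A) * ∫⁻ u in Set.Ioc s t,
                ENNReal.ofReal ((t - u) ^ (((m : ℝ) + 1) - 1)) *
                  ENNReal.ofReal ((u - s) ^ (α - 1))
              ≤ ENNReal.ofReal (C1 * A) *
                  ENNReal.ofReal (cc ((m : ℝ) + 1) α * (t - s) ^ (((m : ℝ) + 1) + α - 1)) :=
                mul_le_mul_right (ker_conv_le hm1 hα h1) _
            _ ≤ ENNReal.ofReal (C1 * A) *
                  ENNReal.ofReal (Kα * (T ^ ((m : ℝ) + 1) * (t - s) ^ (α - 1))) := by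
                apply mul_le_mul_right
                apply ENNReal.ofReal_le_ofReal
                have hccle := cc_succ_le hα m
                have hcc0 := cc_nonneg hm1 hα
                have hsp : (t - s) ^ (((m : ℝ) + 1) + α - 1)
                    = (t - s) ^ ((m : ℝ) + 1) * (t - s) ^ (α - 1) := by
                  rw [← Real.rpow_add hd]; ring_nf
                have hTb : (t - s) ^ ((m : ℝ) + 1) ≤ T ^ ((m : ℝ) + 1) :=
                  Real.rpow_le_rpow hd.le (by linarith) (by positivity)
                have hx0 : (0:ℝ) ≤ (t - s) ^ (α - 1) := Real.rpow_nonneg hd.le _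
                calc cc ((m : ℝ) + 1) α * (t - s) ^ (((m : ℝ) + 1) + α - 1)
                    ≤ Kα * (t - s) ^ (((m : ℝ) + 1) + α - 1) := by
                      apply mul_le_mul_of_nonneg_right hccle (Real.rpow_nonneg hd.le _)
                  _ = Kα * ((t - s) ^ ((m : ℝ) + 1) * (t - s) ^ (α - 1)) := by rw [hsp]
                  _ ≤ Kα * (T ^ ((m : ℝ) + 1) * (t - s) ^ (α - 1)) := by
                      apply mul_le_mul_of_nonneg_left _ hKα0
                      exact mul_le_mul_of_nonneg_right hTb hx0
            _ = ENNReal.ofReal (C1 * A * (Kα * T ^ ((m : ℝ) + 1)))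
                  * ENNReal.ofReal ((t - s) ^ (α - 1)) := by
                rw [← ENNReal.ofReal_mul (mul_nonneg hC1 hA),
                  ← ENNReal.ofReal_mul (by positivity)]
                congr 1
                ring
        · -- S2
          have e2 : ∀ u : ℝ, ENNReal.ofReal ((t - u) ^ (m : ℝ)) *
              (ENNReal.ofReal D2 * ∫⁻ r in Set.Ioc s u, Φ r)
              = ENNReal.ofReal D2 *
                  ∫⁻ r in Set.Ioc s u, ENNReal.ofReal ((t - u) ^ (m : ℝ)) * Φ r := by
            intro u
            rw [lintegral_const_mul' _ _ ENNReal.ofReal_ne_top, ← mul_assoc,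
              mul_comm (ENNReal.ofReal ((t - u) ^ (m : ℝ))) (ENNReal.ofReal D2), mul_assoc]
          simp only [e2]
          rw [lintegral_const_mul' _ _ ENNReal.ofReal_ne_top]
          have hswap := lint_swap (a := s) (b := t)
            (K := fun u _ : ℝ => ENNReal.ofReal ((t - u) ^ (m : ℝ)))
            (Φ := Φ)
            (meas_ker_fst (m : ℝ) t) hΦmeas
          rw [hswap]
          have hinner : ∀ r ∈ Set.Ioc s t,
              (∫⁻ u in Set.Ioc r t, ENNReal.ofReal ((t - u) ^ (m : ℝ))) * Φ r
                = (ENNReal.ofReal (1 / ((m : ℝ) + 1)) *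
                    ENNReal.ofReal ((t - r) ^ ((m : ℝ) + 1))) * Φ r := by
            intro r hr
            congr 1
            have := lint_ker_right (γ := (m : ℝ) + 1) hm1 hr.2
            rw [show ((m : ℝ) + 1) - 1 = (m : ℝ) by ring] at this
            rw [this, ← ENNReal.ofReal_mul (by positivity)]
            congr 1
            ring
          rw [setLIntegral_congr_fun measurableSet_Ioc hinner]
          have e3 : ∀ r : ℝ, (ENNReal.ofReal (1 / ((m : ℝ) + 1)) *
              ENNReal.ofReal ((t - r) ^ ((m : ℝ) + 1))) * Φ r
              = ENNReal.ofReal (1 / ((m : ℝ) + 1)) *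
                  (ENNReal.ofReal ((t - r) ^ ((m : ℝ) + 1)) * Φ r) := fun r => by ring
          simp only [e3]
          rw [lintegral_const_mul' _ _ ENNReal.ofReal_ne_top, ← mul_assoc,
            ← ENNReal.ofReal_mul hD2]
          apply mul_le_mul_left
          apply ENNReal.ofReal_le_ofReal
          apply le_of_eq
          ring
      -- now combine with the induction hypothesis
      have hih := ih t h1 h2
      calc Φ t ≤ ENNReal.ofReal (E m * A) * ENNReal.ofReal ((t - s) ^ (α - 1))
            + ENNReal.ofReal (D2 ^ (m + 1) / (m.factorial : ℝ)) *
                ∫⁻ u in Set.Ioc s t, ENNReal.ofReal ((t - u) ^ (m : ℝ)) * Φ u := hih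
        _ ≤ ENNReal.ofReal (E m * A) * ENNReal.ofReal ((t - s) ^ (α - 1))
            + ENNReal.ofReal (D2 ^ (m + 1) / (m.factorial : ℝ)) *
              (ENNReal.ofReal (C1 * A * (Kα * T ^ ((m : ℝ) + 1)))
                  * ENNReal.ofReal ((t - s) ^ (α - 1))
                + ENNReal.ofReal (D2 / ((m : ℝ) + 1)) *
                    ∫⁻ u in Set.Ioc s t, ENNReal.ofReal ((t - u) ^ ((m : ℝ) + 1)) * Φ u) :=
            add_le_add_right (mul_le_mul_right hR _) _
        _ = ENNReal.ofReal (E (m + 1) * A) * ENNReal.ofReal ((t - s) ^ (α - 1))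
            + ENNReal.ofReal (D2 ^ (m + 1 + 1) / ((m + 1).factorial : ℝ)) *
                ∫⁻ u in Set.Ioc s t, ENNReal.ofReal ((t - u) ^ (((m + 1 : ℕ)) : ℝ)) * Φ u := by
            have hTp : T ^ ((m : ℝ) + 1) = T ^ (m + 1 : ℕ) := by
              rw [← Real.rpow_natCast T (m + 1)]
              push_cast
              ring_nf
            have hadd : ENNReal.ofReal (E m * A)
                + ENNReal.ofReal (D2 ^ (m + 1) / (m.factorial : ℝ)) *
                  ENNReal.ofReal (C1 * A * (Kα * T ^ ((m : ℝ) + 1)))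
                = ENNReal.ofReal (E (m + 1) * A) := by
              rw [← ENNReal.ofReal_mul (by positivity),
                ← ENNReal.ofReal_add (by positivity) (by positivity)]
              congr 1
              rw [hTp]
              simp only [hE, Finset.sum_range_succ]
              rw [mul_pow]
              ring
            have hco : ENNReal.ofReal (D2 ^ (m + 1) / (m.factorial : ℝ)) *
                ENNReal.ofReal (D2 / ((m : ℝ) + 1))
                = ENNReal.ofReal (D2 ^ (m + 1 + 1) / ((m + 1).factorial : ℝ)) := by
              rw [← ENNReal.ofReal_mul (by positivity)]
              congr 1
              rw [Nat.factorial_succ]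
              have hmf : ((m.factorial : ℝ)) ≠ 0 := by positivity
              push_cast
              rw [pow_succ]
              field_simp
              ring
            have grouping : ENNReal.ofReal (E m * A) * ENNReal.ofReal ((t - s) ^ (α - 1))
                + ENNReal.ofReal (D2 ^ (m + 1) / (m.factorial : ℝ)) *
                  (ENNReal.ofReal (C1 * A * (Kα * T ^ ((m : ℝ) + 1)))
                      * ENNReal.ofReal ((t - s) ^ (α - 1))
                    + ENNReal.ofReal (D2 / ((m : ℝ) + 1)) *
                        ∫⁻ u in Set.Ioc s t, ENNReal.ofReal ((t - u) ^ ((m : ℝ) + 1)) * Φ u)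
                = (ENNReal.ofReal (E m * A)
                    + ENNReal.ofReal (D2 ^ (m + 1) / (m.factorial : ℝ)) *
                      ENNReal.ofReal (C1 * A * (Kα * T ^ ((m : ℝ) + 1))))
                      * ENNReal.ofReal ((t - s) ^ (α - 1))
                  + (ENNReal.ofReal (D2 ^ (m + 1) / (m.factorial : ℝ)) *
                      ENNReal.ofReal (D2 / ((m : ℝ) + 1))) *
                      ∫⁻ u in Set.Ioc s t, ENNReal.ofReal ((t - u) ^ ((m : ℝ) + 1)) * Φ u := by
              ring
            rw [grouping, hadd, hco]
            congr 2
            apply lintegral_congr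
            intro u
            norm_cast
  -- pass to the limit
  intro t h1 h2
  set X := ENNReal.ofReal ((t - s) ^ (α - 1)) with hX
  set L := ENNReal.ofReal ((C1 * (1 + Kα * (D2 * T) * Real.exp (D2 * T))) * A) * X with hL
  have hbound : ∀ m : ℕ, Φ t ≤ L + ENNReal.ofReal (D2 * (D2 * T) ^ m / (m.factorial : ℝ)) *
      ∫⁻ u in Set.Ioc s T, Φ u := by
    intro m
    refine le_trans (key m t h1 h2) (add_le_add ?_ ?_)
    · apply mul_le_mul_left
      exact ENNReal.ofReal_le_ofReal (mul_le_mul_of_nonneg_right (hEle m) hA)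
    · -- remainder bound
      have hker : ∀ u ∈ Set.Ioc s t, ENNReal.ofReal ((t - u) ^ (m : ℝ)) * Φ u
          ≤ ENNReal.ofReal (T ^ (m : ℕ)) * Φ u := by
        intro u hu
        apply mul_le_mul_left
        apply ENNReal.ofReal_le_ofReal
        rw [← Real.rpow_natCast T m]
        exact Real.rpow_le_rpow (by linarith [hu.2]) (by linarith [hu.1, hu.2]) (by positivity)
      calc ENNReal.ofReal (D2 ^ (m + 1) / (m.factorial : ℝ)) *
            ∫⁻ u in Set.Ioc s t, ENNReal.ofReal ((t - u) ^ (m : ℝ)) * Φ u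
          ≤ ENNReal.ofReal (D2 ^ (m + 1) / (m.factorial : ℝ)) *
              ∫⁻ u in Set.Ioc s t, ENNReal.ofReal (T ^ (m : ℕ)) * Φ u :=
            mul_le_mul_right (setLIntegral_mono' measurableSet_Ioc hker) _
        _ = ENNReal.ofReal (D2 ^ (m + 1) / (m.factorial : ℝ)) * (ENNReal.ofReal (T ^ (m : ℕ)) *
              ∫⁻ u in Set.Ioc s t, Φ u) := by
            rw [lintegral_const_mul' _ _ ENNReal.ofReal_ne_top]
        _ ≤ ENNReal.ofReal (D2 * (D2 * T) ^ m / (m.factorial : ℝ)) *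
              ∫⁻ u in Set.Ioc s T, Φ u := by
            rw [← mul_assoc, ← ENNReal.ofReal_mul (by positivity)]
            refine mul_le_mul' (ENNReal.ofReal_le_ofReal (le_of_eq ?_))
              (lintegral_mono_set (Set.Ioc_subset_Ioc_right h2))
            rw [mul_pow, pow_succ]
            ring
  have htend : Filter.Tendsto (fun m : ℕ => L + ENNReal.ofReal (D2 * (D2 * T) ^ m / (m.factorial : ℝ)) *
      ∫⁻ u in Set.Ioc s T, Φ u) Filter.atTop (nhds L) := by
    have h0 : Filter.Tendsto (fun m : ℕ => D2 * (D2 * T) ^ m / (m.factorial : ℝ))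
        Filter.atTop (nhds 0) := by
      have hb := FloorSemiring.tendsto_pow_div_factorial_atTop (D2 * T)
      have := hb.const_mul D2
      simpa [mul_div_assoc] using this
    have h1' : Filter.Tendsto (fun m : ℕ => ENNReal.ofReal (D2 * (D2 * T) ^ m / (m.factorial : ℝ)) *
        ∫⁻ u in Set.Ioc s T, Φ u) Filter.atTop (nhds 0) := by
      have h2' := ENNReal.Tendsto.mul_const (ENNReal.tendsto_ofReal h0)
        (b := ∫⁻ u in Set.Ioc s T, Φ u) (Or.inr hfin)
      simpa using h2'
    have := h1'.const_add L
    simpa using this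
  exact ge_of_tendsto htend (Filter.Eventually.of_forall hbound)


variable {T B α β : ℝ}

lemma base_ineq (hβ : 0 < β) {A : ℝ} {φ : ℝ → ℝ → ℝ} (hA : 0 ≤ A) (hB : 0 ≤ B)
    (hφ0 : ∀ t s, 0 ≤ φ t s)
    (hφle : ∀ s t, 0 ≤ s → s ≤ t → t ≤ T →
      φ t s ≤ A * (t - s) ^ (α - 1) + B * ∫ r in s..t, (t - r) ^ (β - 1) * φ r s)
    {s t : ℝ} (hs : 0 ≤ s) (hst : s ≤ t) (htT : t ≤ T) :
    ENNReal.ofReal (φ t s) ≤ ENNReal.ofReal A * ENNReal.ofReal ((t - s) ^ (α - 1))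
      + ENNReal.ofReal B *
        ∫⁻ u in Set.Ioc s t, ENNReal.ofReal ((t - u) ^ (β - 1)) * ENNReal.ofReal (φ u s) := by
  have h := hφle s t hs hst htT
  have hI : ENNReal.ofReal (∫ r in s..t, (t - r) ^ (β - 1) * φ r s)
      ≤ ∫⁻ u in Set.Ioc s t, ENNReal.ofReal ((t - u) ^ (β - 1)) * ENNReal.ofReal (φ u s) := by
    rw [intervalIntegral.integral_of_le hst]
    refine le_trans (ofReal_setIntegral_le measurableSet_Ioc fun r hr =>
      mul_nonneg (Real.rpow_nonneg (by linarith [hr.2]) _) (hφ0 r s)) ?_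
    refine le_of_eq (lintegral_congr_ae ((ae_restrict_iff' measurableSet_Ioc).mpr
      (ae_of_all _ fun u hu => ?_)))
    exact ENNReal.ofReal_mul (Real.rpow_nonneg (by linarith [hu.2]) _)
  calc ENNReal.ofReal (φ t s)
      ≤ ENNReal.ofReal (A * (t - s) ^ (α - 1) + B * ∫ r in s..t, (t - r) ^ (β - 1) * φ r s) :=
        ENNReal.ofReal_le_ofReal h
    _ ≤ ENNReal.ofReal (A * (t - s) ^ (α - 1))
        + ENNReal.ofReal (B * ∫ r in s..t, (t - r) ^ (β - 1) * φ r s) := ENNReal.ofReal_add_le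
    _ ≤ _ := by
        apply add_le_add
        · rw [ENNReal.ofReal_mul hA]
        · rw [ENNReal.ofReal_mul hB]
          exact mul_le_mul_right hI _

lemma stageA (hT : 0 < T) (hB : 0 ≤ B) (hα : 0 < α) (hβ : 0 < β) (n : ℕ) :
    ∃ C D : ℝ, 0 ≤ C ∧ 0 ≤ D ∧
      ∀ (A : ℝ) (φ : ℝ → ℝ → ℝ), 0 ≤ A → (∀ t s, 0 ≤ φ t s) →
        Measurable (fun p : ℝ × ℝ => φ p.1 p.2) →
        (∀ s t, 0 ≤ s → s ≤ t → t ≤ T →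
          φ t s ≤ A * (t - s) ^ (α - 1) + B * ∫ r in s..t, (t - r) ^ (β - 1) * φ r s) →
        ∀ s t, 0 ≤ s → s < t → t ≤ T →
          ENNReal.ofReal (φ t s) ≤
            ENNReal.ofReal (C * A) * ENNReal.ofReal ((t - s) ^ (α - 1))
            + ENNReal.ofReal D * ∫⁻ u in Set.Ioc s t,
                ENNReal.ofReal ((t - u) ^ (((n : ℝ) + 1) * β - 1)) * ENNReal.ofReal (φ u s) := by
  induction n with
  | zero =>
    refine ⟨1, B, zero_le_one, hB, ?_⟩
    intro A φ hA hφ0 hφmeas hφle s t hs hst htT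
    have h := base_ineq hβ hA hB hφ0 hφle hs hst.le htT
    simpa using h
  | succ n ih =>
    obtain ⟨C, D, hC, hD, hmain⟩ := ih
    set ν : ℝ := ((n : ℝ) + 1) * β with hν
    have hν0 : 0 < ν := by positivity
    have hccα := cc_nonneg hν0 hα
    have hccβ := cc_nonneg hν0 hβ
    refine ⟨C + D * (cc ν α * T ^ ν), D * (B * cc ν β), by
        have h2 : (0:ℝ) ≤ T ^ ν := Real.rpow_nonneg hT.le _
        positivity, by positivity, ?_⟩
    intro A φ hA hφ0 hφmeas hφle s t hs hst htT
    have hmeasΦ : Measurable fun u : ℝ => ENNReal.ofReal (φ u s) :=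
      ((hφmeas.comp (measurable_id.prodMk measurable_const))).ennreal_ofReal
    have hd : 0 < t - s := by linarith
    have hcast : ((n : ℝ) + 1 + 1) * β - 1 = ν + β - 1 := by ring
    -- Term 1 bound
    have hT1 : (∫⁻ u in Set.Ioc s t,
          ENNReal.ofReal ((t - u) ^ (ν - 1)) *
            (ENNReal.ofReal A * ENNReal.ofReal ((u - s) ^ (α - 1))))
        ≤ ENNReal.ofReal (A * (cc ν α * T ^ ν)) * ENNReal.ofReal ((t - s) ^ (α - 1)) := by
      have e1 : ∀ u : ℝ, ENNReal.ofReal ((t - u) ^ (ν - 1)) *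
          (ENNReal.ofReal A * ENNReal.ofReal ((u - s) ^ (α - 1)))
          = ENNReal.ofReal A *
            (ENNReal.ofReal ((t - u) ^ (ν - 1)) * ENNReal.ofReal ((u - s) ^ (α - 1))) := by
        intro u; ring
      simp only [e1]
      rw [lintegral_const_mul' _ _ ENNReal.ofReal_ne_top]
      calc ENNReal.ofReal A * ∫⁻ u in Set.Ioc s t,
            ENNReal.ofReal ((t - u) ^ (ν - 1)) * ENNReal.ofReal ((u - s) ^ (α - 1))
          ≤ ENNReal.ofReal A * ENNReal.ofReal (cc ν α * (t - s) ^ (ν + α - 1)) :=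
            mul_le_mul_right (ker_conv_le hν0 hα hst) _
        _ ≤ ENNReal.ofReal A * ENNReal.ofReal (cc ν α * (T ^ ν * (t - s) ^ (α - 1))) := by
            apply mul_le_mul_right
            apply ENNReal.ofReal_le_ofReal
            apply mul_le_mul_of_nonneg_left _ hccα
            have hsplit : (t - s) ^ (ν + α - 1) = (t - s) ^ ν * (t - s) ^ (α - 1) := by
              rw [← Real.rpow_add hd]; ring_nf
            rw [hsplit]
            apply mul_le_mul_of_nonneg_right _ (Real.rpow_nonneg hd.le _)
            exact Real.rpow_le_rpow hd.le (by linarith) hν0.le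
        _ = ENNReal.ofReal (A * (cc ν α * T ^ ν)) * ENNReal.ofReal ((t - s) ^ (α - 1)) := by
            rw [← ENNReal.ofReal_mul hA, ← ENNReal.ofReal_mul (by positivity)]
            congr 1
            ring
    -- Term 2 bound
    have hT2 : (∫⁻ u in Set.Ioc s t,
          ENNReal.ofReal ((t - u) ^ (ν - 1)) *
            (ENNReal.ofReal B *
              ∫⁻ r in Set.Ioc s u, ENNReal.ofReal ((u - r) ^ (β - 1)) * ENNReal.ofReal (φ r s)))
        ≤ ENNReal.ofReal (B * cc ν β) * ∫⁻ u in Set.Ioc s t,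
            ENNReal.ofReal ((t - u) ^ (((n : ℝ) + 1 + 1) * β - 1)) * ENNReal.ofReal (φ u s) := by
      have e1 : ∀ u : ℝ, ENNReal.ofReal ((t - u) ^ (ν - 1)) *
          (ENNReal.ofReal B *
            ∫⁻ r in Set.Ioc s u, ENNReal.ofReal ((u - r) ^ (β - 1)) * ENNReal.ofReal (φ r s))
          = ENNReal.ofReal B * ∫⁻ r in Set.Ioc s u,
              (ENNReal.ofReal ((t - u) ^ (ν - 1)) * ENNReal.ofReal ((u - r) ^ (β - 1)))
                * ENNReal.ofReal (φ r s) := by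
        intro u
        rw [← mul_assoc, mul_comm (ENNReal.ofReal ((t - u) ^ (ν - 1))), mul_assoc,
          ← lintegral_const_mul' _ _ ENNReal.ofReal_ne_top]
        congr 1
        apply lintegral_congr
        intro r
        ring
      simp only [e1]
      rw [lintegral_const_mul' _ _ ENNReal.ofReal_ne_top]
      have hswap := lint_swap (a := s) (b := t)
        (K := fun u r => ENNReal.ofReal ((t - u) ^ (ν - 1)) * ENNReal.ofReal ((u - r) ^ (β - 1)))
        (Φ := fun r => ENNReal.ofReal (φ r s)) ?_ hmeasΦ
      · rw [hswap]
        have hpt : ∀ r ∈ Set.Ioc s t,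
            (∫⁻ u in Set.Ioc r t,
              ENNReal.ofReal ((t - u) ^ (ν - 1)) * ENNReal.ofReal ((u - r) ^ (β - 1)))
                * ENNReal.ofReal (φ r s)
            ≤ (ENNReal.ofReal (cc ν β) *
                ENNReal.ofReal ((t - r) ^ (((n : ℝ) + 1 + 1) * β - 1))) * ENNReal.ofReal (φ r s) := by
          intro r hr
          apply mul_le_mul_left
          rcases lt_or_eq_of_le hr.2 with hrt | hrt
          · calc (∫⁻ u in Set.Ioc r t,
                ENNReal.ofReal ((t - u) ^ (ν - 1)) * ENNReal.ofReal ((u - r) ^ (β - 1)))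
                ≤ ENNReal.ofReal (cc ν β * (t - r) ^ (ν + β - 1)) := ker_conv_le hν0 hβ hrt
              _ = ENNReal.ofReal (cc ν β) * ENNReal.ofReal ((t - r) ^ (((n : ℝ) + 1 + 1) * β - 1)) := by
                  rw [hcast, ENNReal.ofReal_mul hccβ]
          · rw [← hrt, Set.Ioc_self]
            simp
        calc ENNReal.ofReal B * ∫⁻ r in Set.Ioc s t,
              (∫⁻ u in Set.Ioc r t,
                ENNReal.ofReal ((t - u) ^ (ν - 1)) * ENNReal.ofReal ((u - r) ^ (β - 1)))
                  * ENNReal.ofReal (φ r s)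
            ≤ ENNReal.ofReal B * ∫⁻ r in Set.Ioc s t,
                (ENNReal.ofReal (cc ν β) *
                  ENNReal.ofReal ((t - r) ^ (((n : ℝ) + 1 + 1) * β - 1))) * ENNReal.ofReal (φ r s) :=
              mul_le_mul_right (setLIntegral_mono' measurableSet_Ioc hpt) _
          _ = ENNReal.ofReal (B * cc ν β) * ∫⁻ u in Set.Ioc s t,
                ENNReal.ofReal ((t - u) ^ (((n : ℝ) + 1 + 1) * β - 1)) * ENNReal.ofReal (φ u s) := by
              simp only [mul_assoc]
              rw [lintegral_const_mul' _ _ ENNReal.ofReal_ne_top,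
                ENNReal.ofReal_mul hB, mul_assoc]
      · apply Measurable.mul (f := fun p : ℝ × ℝ => ENNReal.ofReal ((t - p.1) ^ (ν - 1)))
          (g := fun p : ℝ × ℝ => ENNReal.ofReal ((p.1 - p.2) ^ (β - 1)))
        · exact (meas_ker_right ν t).comp measurable_fst
        · exact ((meas_rpow_const (β - 1)).comp (measurable_fst.sub measurable_snd)).ennreal_ofReal
    -- combine
    have hmid := hmain A φ hA hφ0 hφmeas hφle s t hs hst htT
    have hJ : (∫⁻ u in Set.Ioc s t,
          ENNReal.ofReal ((t - u) ^ (((n : ℝ) + 1) * β - 1)) * ENNReal.ofReal (φ u s))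
        ≤ ENNReal.ofReal (A * (cc ν α * T ^ ν)) * ENNReal.ofReal ((t - s) ^ (α - 1))
          + ENNReal.ofReal (B * cc ν β) * ∫⁻ u in Set.Ioc s t,
              ENNReal.ofReal ((t - u) ^ (((n : ℝ) + 1 + 1) * β - 1)) * ENNReal.ofReal (φ u s) := by
      have hstep : (∫⁻ u in Set.Ioc s t,
            ENNReal.ofReal ((t - u) ^ (((n : ℝ) + 1) * β - 1)) * ENNReal.ofReal (φ u s))
          ≤ ∫⁻ u in Set.Ioc s t,
              (ENNReal.ofReal ((t - u) ^ (ν - 1)) *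
                (ENNReal.ofReal A * ENNReal.ofReal ((u - s) ^ (α - 1)))
              + ENNReal.ofReal ((t - u) ^ (ν - 1)) *
                (ENNReal.ofReal B *
                  ∫⁻ r in Set.Ioc s u, ENNReal.ofReal ((u - r) ^ (β - 1)) * ENNReal.ofReal (φ r s))) := by
        refine setLIntegral_mono' measurableSet_Ioc ?_
        intro u hu
        have hexp : ((n : ℝ) + 1) * β - 1 = ν - 1 := by rw [hν]
        rw [hexp, ← mul_add]
        exact mul_le_mul_right
          (base_ineq hβ hA hB hφ0 hφle hs (by linarith [hu.1]) (by linarith [hu.2])) _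
      refine le_trans hstep ?_
      rw [lintegral_add_left]
      · exact add_le_add hT1 hT2
      · exact ((meas_ker_right ν t).mul
          (measurable_const.mul ((meas_ker_left α s)))) 
    calc ENNReal.ofReal (φ t s)
        ≤ ENNReal.ofReal (C * A) * ENNReal.ofReal ((t - s) ^ (α - 1))
          + ENNReal.ofReal D * ∫⁻ u in Set.Ioc s t,
              ENNReal.ofReal ((t - u) ^ (((n : ℝ) + 1) * β - 1)) * ENNReal.ofReal (φ u s) := hmid
      _ ≤ ENNReal.ofReal (C * A) * ENNReal.ofReal ((t - s) ^ (α - 1))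
          + ENNReal.ofReal D *
            (ENNReal.ofReal (A * (cc ν α * T ^ ν)) * ENNReal.ofReal ((t - s) ^ (α - 1))
              + ENNReal.ofReal (B * cc ν β) * ∫⁻ u in Set.Ioc s t,
                ENNReal.ofReal ((t - u) ^ (((n : ℝ) + 1 + 1) * β - 1)) * ENNReal.ofReal (φ u s)) :=
          add_le_add_right (mul_le_mul_right hJ _) _
      _ = ENNReal.ofReal ((C + D * (cc ν α * T ^ ν)) * A) * ENNReal.ofReal ((t - s) ^ (α - 1))
          + ENNReal.ofReal (D * (B * cc ν β)) * ∫⁻ u in Set.Ioc s t,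
              ENNReal.ofReal ((t - u) ^ (((n : ℝ) + 1 + 1) * β - 1)) * ENNReal.ofReal (φ u s) := by
          have e1 : ENNReal.ofReal ((C + D * (cc ν α * T ^ ν)) * A)
              = ENNReal.ofReal (C * A) + ENNReal.ofReal D * ENNReal.ofReal (A * (cc ν α * T ^ ν)) := by
            rw [← ENNReal.ofReal_mul hD, ← ENNReal.ofReal_add (by positivity) (by positivity)]
            congr 1
            ring
          have e2 : ENNReal.ofReal (D * (B * cc ν β))
              = ENNReal.ofReal D * ENNReal.ofReal (B * cc ν β) := ENNReal.ofReal_mul hD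
          rw [e1, e2]
          ring
      _ = _ := by push_cast; rfl


end Main
end GGron

open MeasureTheory

/-- Generalized Gronwall lemma with weakly singular kernel. -/
theorem generalized_gronwall (T B α β : ℝ) (hT : 0 < T) (hB : 0 ≤ B)
    (hα : 0 < α) (hβ : 0 < β) :
    ∃ C : ℝ, 0 ≤ C ∧ ∀ (A : ℝ) (φ : ℝ → ℝ → ℝ), 0 ≤ A →
      (∀ t s, 0 ≤ φ t s) →
      Measurable (fun p : ℝ × ℝ => φ p.1 p.2) →
      (∀ s, 0 ≤ s → s ≤ T → IntervalIntegrable (fun r => φ r s) volume s T) →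
      (∀ s t, 0 ≤ s → s ≤ t → t ≤ T →
        φ t s ≤ A * (t - s) ^ (α - 1) + B * ∫ r in s..t, (t - r) ^ (β - 1) * φ r s) →
      ∀ s t, 0 ≤ s → s ≤ t → t ≤ T → φ t s ≤ C * A * (t - s) ^ (α - 1) := by
  classical
  obtain ⟨n, hn⟩ := exists_nat_ge (1 / β)
  have hν1 : 1 ≤ ((n : ℝ) + 1) * β := by
    have h1 : (1 / β) * β ≤ ((n : ℝ) + 1) * β := by nlinarith
    rwa [one_div_mul_cancel hβ.ne'] at h1
  obtain ⟨C1, D1, hC1, hD1, hmain⟩ := GGron.stageA hT hB hα hβ n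
  set D2 : ℝ := D1 * T ^ (((n : ℝ) + 1) * β - 1) with hD2def
  have hD2 : 0 ≤ D2 := mul_nonneg hD1 (Real.rpow_nonneg hT.le _)
  set Efin : ℝ := C1 * (1 + (max 1 (2 ^ (1 - α)) + 1 / α) * (D2 * T) * Real.exp (D2 * T))
    with hEfin
  have hEfin0 : 0 ≤ Efin := by
    have h1 := GGron.max_nonneg' ((2:ℝ) ^ (1 - α))
    have h2 := Real.exp_nonneg (D2 * T)
    rw [hEfin]
    positivity
  refine ⟨max Efin 1, le_trans zero_le_one (le_max_right _ _), ?_⟩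
  intro A φ hA hφ0 hφmeas hInt hφle s t hs hst htT
  rcases eq_or_lt_of_le hst with heq | hlt
  · -- degenerate case t = s
    subst heq
    have h := hφle s s hs le_rfl htT
    rw [intervalIntegral.integral_same, mul_zero, add_zero, sub_self] at h
    rw [sub_self]
    rcases eq_or_ne α 1 with hα1 | hα1
    · rw [hα1] at h ⊢
      rw [sub_self, Real.rpow_zero] at h ⊢
      have hE1 : (1:ℝ) ≤ max Efin 1 := le_max_right _ _
      nlinarith
    · rw [Real.zero_rpow (by intro hc; exact hα1 (by linarith)), mul_zero] at h ⊢
      exact h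
  · -- main case s < t
    set Φ : ℝ → ENNReal := fun u => ENNReal.ofReal (φ u s) with hΦ
    have hΦmeas : Measurable Φ :=
      (hφmeas.comp (measurable_id.prodMk measurable_const)).ennreal_ofReal
    have hsT : s ≤ T := le_trans hst htT
    have hfin : (∫⁻ u in Set.Ioc s T, Φ u) ≠ ⊤ := by
      have hIOn : IntegrableOn (fun r => φ r s) (Set.Ioc s T) volume :=
        (intervalIntegrable_iff_integrableOn_Ioc_of_le hsT).mp (hInt s hs hsT)
      have hfi := hIOn.2
      refine ne_of_lt (lt_of_le_of_lt ?_ hfi)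
      exact lintegral_mono fun u => Real.ofReal_le_enorm _
    have hbase : ∀ t', s < t' → t' ≤ T →
        Φ t' ≤ ENNReal.ofReal (C1 * A) * ENNReal.ofReal ((t' - s) ^ (α - 1))
          + ENNReal.ofReal D2 * ∫⁻ u in Set.Ioc s t', Φ u := by
      intro t' h1 h2
      have h := hmain A φ hA hφ0 hφmeas hφle s t' hs h1 h2
      refine le_trans h (add_le_add_right ?_ _)
      calc ENNReal.ofReal D1 * ∫⁻ u in Set.Ioc s t',
            ENNReal.ofReal ((t' - u) ^ (((n : ℝ) + 1) * β - 1)) * ENNReal.ofReal (φ u s)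
          ≤ ENNReal.ofReal D1 * ∫⁻ u in Set.Ioc s t',
              ENNReal.ofReal (T ^ (((n : ℝ) + 1) * β - 1)) * Φ u := by
            apply mul_le_mul_right
            refine setLIntegral_mono' measurableSet_Ioc ?_
            intro u hu
            apply mul_le_mul_left
            apply ENNReal.ofReal_le_ofReal
            apply Real.rpow_le_rpow (by linarith [hu.2]) (by linarith [hu.1, hu.2, hs])
            linarith
        _ = ENNReal.ofReal D2 * ∫⁻ u in Set.Ioc s t', Φ u := by
            rw [lintegral_const_mul' _ _ ENNReal.ofReal_ne_top, ← mul_assoc,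
              ← ENNReal.ofReal_mul hD1]
    have hfinal := GGron.stageB hT hα hC1 hD2 hA hΦmeas hs hfin hbase t hlt htT
    have hXnn : (0:ℝ) ≤ (t - s) ^ (α - 1) := Real.rpow_nonneg (by linarith) _
    have hcollapse : Φ t ≤ ENNReal.ofReal (Efin * A * ((t - s) ^ (α - 1))) := by
      rw [ENNReal.ofReal_mul (mul_nonneg hEfin0 hA)]
      exact hfinal
    have hreal : φ t s ≤ Efin * A * ((t - s) ^ (α - 1)) :=
      (ENNReal.ofReal_le_ofReal_iff (by positivity)).mp hcollapse
    refine le_trans hreal ?_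
    apply mul_le_mul_of_nonneg_right _ hXnn
    exact mul_le_mul_of_nonneg_right (le_max_left _ _) hA
end

section
/- Let T ∈ (0,∞), k ∈ (0,1), and M ∈ ℕ with M k ≤ T < (M+1) k; set t_m := m k. Let (φ_i)_{i=0}^M be nonnegative reals satisfying φ_m ≤ A + B k ∑_{i=0}^{m-1} t_{m-i}^{β-1} φ_i for all m ∈ {0,…,M}, for some constants A, B ∈ [0,∞) and β ∈ (0,1]. Then there exists a constant C = C(B,T,β) ∈ [0,∞), independent of k, M, A and of the sequence, such that φ_m ≤ C A for all m ∈ {0,…,M}. -/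
lemma dg_concave_step (β a b : ℝ) (hβ0 : 0 < β) (hβ1 : β ≤ 1) (ha : 0 ≤ a)
    (hab : a ≤ b) (hb : 0 < b) : β * b ^ (β - 1) * (b - a) ≤ b ^ β - a ^ β := by
  have ht0 : (0:ℝ) ≤ a / b := div_nonneg ha hb.le
  have hbern : (a / b) ^ β ≤ (1 - β) + β * (a / b) := by
    have h := Real.geom_mean_le_arith_mean2_weighted (by linarith : (0:ℝ) ≤ 1 - β) hβ0.le
      zero_le_one ht0 (by ring)
    simpa [Real.one_rpow] using h
  have haβ : a ^ β = (a / b) ^ β * b ^ β := by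
    rw [← Real.mul_rpow ht0 hb.le, div_mul_cancel₀]
    exact hb.ne'
  have hbβ : b ^ β = b ^ (β - 1) * b := by
    rw [← Real.rpow_add_one hb.ne' (β - 1)]
    ring_nf
  have hbβ0 : 0 ≤ b ^ β := Real.rpow_nonneg hb.le β
  have key : a ^ β ≤ (1 - β) * b ^ β + β * (a / b) * b ^ β := by
    rw [haβ]
    nlinarith [hbern]
  have h2 : a / b * b ^ β = a * b ^ (β - 1) := by
    rw [hbβ]
    field_simp
  nlinarith [key, hbβ, h2]

lemma dg_kernel_sum (β k : ℝ) (hβ0 : 0 < β) (hβ1 : β ≤ 1) (hk : 0 < k) (N : ℕ) :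
    β * ∑ j ∈ Finset.range N, k * ((((j : ℝ) + 1)) * k) ^ (β - 1) ≤ ((N : ℝ) * k) ^ β := by
  induction N with
  | zero => simp [Real.zero_rpow hβ0.ne']
  | succ N ih =>
      rw [Finset.sum_range_succ, mul_add]
      have hb : (0:ℝ) < ((N : ℝ) + 1) * k := by positivity
      have ha : (0:ℝ) ≤ (N : ℝ) * k := by positivity
      have hstep := dg_concave_step β ((N:ℝ)*k) (((N:ℝ)+1)*k) hβ0 hβ1 ha
        (by nlinarith) hb
      have hd : ((N:ℝ)+1)*k - (N:ℝ)*k = k := by ring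
      rw [hd] at hstep
      push_cast
      nlinarith [ih, hstep]

lemma dg_lin_gronwall (a q : ℝ) (g : ℕ → ℝ) (ha : 0 ≤ a) (hq : 0 ≤ q) (M : ℕ)
    (h : ∀ m, m ≤ M → g m ≤ a + q * ∑ i ∈ Finset.range m, g i) :
    ∀ m, m ≤ M → g m ≤ a * (1 + q) ^ m := by
  intro m
  induction m using Nat.strong_induction_on with
  | _ m ih =>
      intro hm
      have h1 : g m ≤ a + q * ∑ i ∈ Finset.range m, g i := h m hm
      have h2 : ∑ i ∈ Finset.range m, g i ≤ ∑ i ∈ Finset.range m, a * (1 + q) ^ i :=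
        Finset.sum_le_sum fun i hi => ih i (Finset.mem_range.mp hi)
          (le_trans (Nat.le_of_lt (Finset.mem_range.mp hi)) hm)
      have h3 : (∑ i ∈ Finset.range m, (1 + q) ^ i) * q = (1 + q) ^ m - 1 := by
        have := geom_sum_mul (1 + q) m
        simpa using this
      have h4 : ∑ i ∈ Finset.range m, a * (1 + q) ^ i
          = a * ∑ i ∈ Finset.range m, (1 + q) ^ i := by
        rw [Finset.mul_sum]
      nlinarith [h1, h2, h3, h4, mul_le_mul_of_nonneg_left h2 hq]

namespace WeaklySingular

set_option maxHeartbeats 1000000 in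
/-- Discrete Gronwall lemma with weakly singular kernel on a uniform grid. -/
theorem discrete_gronwall (T B β : ℝ) (hT : 0 < T) (hB : 0 ≤ B)
    (hβ0 : 0 < β) (hβ1 : β ≤ 1) :
    ∃ C : ℝ, 0 ≤ C ∧ ∀ (k : ℝ) (M : ℕ) (A : ℝ) (φ : ℕ → ℝ),
      0 < k → k < 1 → (M : ℝ) * k ≤ T → T < ((M : ℝ) + 1) * k → 0 ≤ A →
      (∀ i, 0 ≤ φ i) →
      (∀ m, m ≤ M →
        φ m ≤ A + B * k * ∑ i ∈ Finset.range m, (((m - i : ℕ) : ℝ) * k) ^ (β - 1) * φ i) →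
      ∀ m, m ≤ M → φ m ≤ C * A := by
  set r : ℝ := β / (2 * B + 1) with hrdef
  have hr0 : 0 < r := by positivity
  have hr1 : r ≤ 1 := by
    rw [hrdef, div_le_one (by linarith)]
    linarith
  set d : ℝ := r ^ (1/β) / 2 with hddef
  have hd0 : 0 < d := by
    have := Real.rpow_pos_of_pos hr0 (1/β)
    positivity
  have h2d : (2 * d) ^ β = r := by
    have h1 : 2 * d = r ^ (1/β) := by rw [hddef]; ring
    rw [h1, ← Real.rpow_mul hr0.le, one_div, inv_mul_cancel₀ hβ0.ne', Real.rpow_one]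
  set C1 : ℝ := (1 + B) ^ (⌈T/d⌉₊) with hC1def
  set C2 : ℝ := 2 * Real.exp (2 * B * d ^ (β - 1) * T) with hC2def
  refine ⟨max C1 C2, le_trans (by positivity) (le_max_left C1 C2), ?_⟩
  intro k M A φ hk0 hk1 hMk hTk hA hφ hrec m hm
  by_cases hkd : d ≤ k
  · -- few steps: crude geometric bound
    have step : ∀ m', m' ≤ M → φ m' ≤ A + B * ∑ i ∈ Finset.range m', φ i := by
      intro m' hm'
      refine le_trans (hrec m' hm') ?_
      have hsum : k * ∑ i ∈ Finset.range m', (((m' - i : ℕ) : ℝ) * k) ^ (β - 1) * φ i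
          ≤ ∑ i ∈ Finset.range m', φ i := by
        rw [Finset.mul_sum]
        refine Finset.sum_le_sum fun i hi => ?_
        have hi' : i < m' := Finset.mem_range.mp hi
        have h1 : (1:ℝ) ≤ ((m' - i : ℕ) : ℝ) := by
          have : 1 ≤ m' - i := by omega
          exact_mod_cast this
        have hker : (((m' - i : ℕ) : ℝ) * k) ^ (β - 1) ≤ k ^ (β - 1) :=
          Real.rpow_le_rpow_of_nonpos hk0 (by nlinarith) (by linarith)
        have hkk : k * k ^ (β - 1) = k ^ β := by
          rw [mul_comm, ← Real.rpow_add_one hk0.ne' (β - 1)]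
          norm_num
        have hk1' : k ^ β ≤ 1 := Real.rpow_le_one hk0.le hk1.le hβ0.le
        have hker0 : 0 ≤ k ^ (β - 1) := Real.rpow_nonneg hk0.le _
        calc k * ((((m' - i : ℕ) : ℝ) * k) ^ (β - 1) * φ i)
            ≤ k * (k ^ (β - 1) * φ i) := by
              exact mul_le_mul_of_nonneg_left
                (mul_le_mul_of_nonneg_right hker (hφ i)) hk0.le
          _ = k ^ β * φ i := by rw [← hkk]; ring
          _ ≤ 1 * φ i := mul_le_mul_of_nonneg_right hk1' (hφ i)
          _ = φ i := one_mul _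
      calc A + B * k * ∑ i ∈ Finset.range m', (((m' - i : ℕ) : ℝ) * k) ^ (β - 1) * φ i
          = A + B * (k * ∑ i ∈ Finset.range m', (((m' - i : ℕ) : ℝ) * k) ^ (β - 1) * φ i) := by
            ring
        _ ≤ A + B * ∑ i ∈ Finset.range m', φ i := by
            have := mul_le_mul_of_nonneg_left hsum hB
            linarith
    have hgron := dg_lin_gronwall A B φ hA hB M step m hm
    have hmceil : m ≤ ⌈T/d⌉₊ := by
      have hMk' : (M : ℝ) ≤ T / k := by rw [le_div_iff₀ hk0]; exact hMk
      have hdk : T / k ≤ T / d := div_le_div_of_nonneg_left hT.le hd0 hkd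
      have hmR : (m : ℝ) ≤ T / d :=
        le_trans (le_trans (Nat.cast_le.mpr hm) hMk') hdk
      exact_mod_cast le_trans hmR (Nat.le_ceil _)
    have hpow : (1 + B) ^ m ≤ C1 := by
      rw [hC1def]
      exact pow_le_pow_right₀ (by linarith) hmceil
    calc φ m ≤ A * (1 + B) ^ m := hgron
      _ = (1 + B) ^ m * A := by ring
      _ ≤ C1 * A := mul_le_mul_of_nonneg_right hpow hA
      _ ≤ max C1 C2 * A := mul_le_mul_of_nonneg_right (le_max_left _ _) hA
  · -- k < d : singular Gronwall argument
    push_neg at hkd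
    set N : ℕ := ⌈d / k⌉₊ with hNdef
    have hNk_lo : d ≤ (N : ℝ) * k := by
      have := Nat.le_ceil (d / k)
      rw [hNdef]
      calc d = d / k * k := by field_simp
        _ ≤ (⌈d / k⌉₊ : ℝ) * k := mul_le_mul_of_nonneg_right this hk0.le
    have hNk_hi : (N : ℝ) * k ≤ 2 * d := by
      have h1 : (⌈d / k⌉₊ : ℝ) < d / k + 1 := Nat.ceil_lt_add_one (by positivity)
      have h2 : (N : ℝ) * k < (d / k + 1) * k := by
        rw [hNdef]; exact mul_lt_mul_of_pos_right h1 hk0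
      have h3 : (d / k + 1) * k = d + k := by field_simp
      nlinarith
    -- running max of φ
    set F : ℕ → ℝ := fun n => (Finset.range (n+1)).sup' Finset.nonempty_range_add_one φ
      with hFdef
    have hFle : ∀ i n, i ≤ n → φ i ≤ F n := fun i n h =>
      Finset.le_sup' φ (Finset.mem_range.mpr (Nat.lt_succ_of_le h))
    have hF0 : ∀ n, 0 ≤ F n := fun n => le_trans (hφ 0) (hFle 0 n (Nat.zero_le n))
    have hd1 : 0 ≤ d ^ (β - 1) := Real.rpow_nonneg hd0.le _
    set q : ℝ := 2 * B * d ^ (β - 1) * k with hqdef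
    have hq0 : 0 ≤ q := by positivity
    -- near-sum bound
    have hnear : k * ∑ i ∈ Finset.range N, (((i:ℝ) + 1) * k) ^ (β - 1) ≤ 1 / (2 * B + 1) := by
      have h1 := dg_kernel_sum β k hβ0 hβ1 hk0 N
      rw [← Finset.mul_sum] at h1
      have h2 : ((N:ℝ) * k) ^ β ≤ (2 * d) ^ β :=
        Real.rpow_le_rpow (by positivity) hNk_hi hβ0.le
      rw [h2d, hrdef] at h2
      have h3 : β * (k * ∑ i ∈ Finset.range N, (((i:ℝ) + 1) * k) ^ (β - 1)) ≤ β / (2 * B + 1) :=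
        le_trans h1 h2
      have h4 : β * (k * ∑ i ∈ Finset.range N, (((i:ℝ) + 1) * k) ^ (β - 1))
          ≤ β * (1 / (2 * B + 1)) := by rw [mul_one_div]; exact h3
      exact le_of_mul_le_mul_left h4 hβ0
    -- key recursion for F
    have key : ∀ m', m' ≤ M → F m' ≤ 2 * A + q * ∑ i ∈ Finset.range m', F i := by
      intro m' hm'
      obtain ⟨j, hjmem, hFj⟩ := Finset.exists_mem_eq_sup'
        (Finset.nonempty_range_add_one : (Finset.range (m'+1)).Nonempty) φ
      have hjm : j ≤ m' := Nat.lt_succ_iff.mp (Finset.mem_range.mp hjmem)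
      have hrecj := hrec j (le_trans hjm hm')
      -- pointwise bound on the kernel sum at level j
      have hpt : ∀ i ∈ Finset.range j,
          (((j - i : ℕ) : ℝ) * k) ^ (β - 1) * φ i ≤
            (if j - i ≤ N then (((j - i : ℕ) : ℝ) * k) ^ (β - 1) else 0) * F m'
              + d ^ (β - 1) * φ i := by
        intro i hi
        have hij : i < j := Finset.mem_range.mp hi
        have hφF : φ i ≤ F m' := hFle i m' (le_trans (Nat.le_of_lt hij) hjm)
        by_cases hcase : j - i ≤ N
        · rw [if_pos hcase]
          have hker0 : 0 ≤ (((j - i : ℕ) : ℝ) * k) ^ (β - 1) :=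
            Real.rpow_nonneg (by positivity) _
          nlinarith [mul_le_mul_of_nonneg_left hφF hker0, mul_nonneg hd1 (hφ i)]
        · rw [if_neg hcase]
          push_neg at hcase
          have hbase : d ≤ ((j - i : ℕ) : ℝ) * k := by
            have h1 : (N : ℝ) ≤ ((j - i : ℕ) : ℝ) := by exact_mod_cast Nat.le_of_lt hcase
            nlinarith
          have hker : (((j - i : ℕ) : ℝ) * k) ^ (β - 1) ≤ d ^ (β - 1) :=
            Real.rpow_le_rpow_of_nonpos hd0 hbase (by linarith)
          have := mul_le_mul_of_nonneg_right hker (hφ i)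
          nlinarith [hF0 m']
      -- sum it up
      have hsum1 : ∑ i ∈ Finset.range j, (((j - i : ℕ) : ℝ) * k) ^ (β - 1) * φ i ≤
          (∑ i ∈ Finset.range j,
            (if j - i ≤ N then (((j - i : ℕ) : ℝ) * k) ^ (β - 1) else 0)) * F m'
          + d ^ (β - 1) * ∑ i ∈ Finset.range j, φ i := by
        rw [Finset.sum_mul, Finset.mul_sum, ← Finset.sum_add_distrib]
        exact Finset.sum_le_sum hpt
      -- reindex the near kernel sum
      have hrefl : ∑ i ∈ Finset.range j,
            (if j - i ≤ N then (((j - i : ℕ) : ℝ) * k) ^ (β - 1) else 0)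
          = ∑ i ∈ Finset.range j,
            (if i + 1 ≤ N then (((i:ℝ) + 1) * k) ^ (β - 1) else 0) := by
        rw [← Finset.sum_range_reflect
          (fun i => if i + 1 ≤ N then (((i:ℝ) + 1) * k) ^ (β - 1) else 0) j]
        refine Finset.sum_congr rfl fun i hi => ?_
        have hij : i < j := Finset.mem_range.mp hi
        have he : j - 1 - i + 1 = j - i := by omega
        have he2 : ((j - i : ℕ) : ℝ) = ((j - 1 - i : ℕ) : ℝ) + 1 := by
          rw [← he]; push_cast; ring
        rw [he, he2]
      have hfilter : ∑ i ∈ Finset.range j,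
            (if i + 1 ≤ N then (((i:ℝ) + 1) * k) ^ (β - 1) else 0)
          ≤ ∑ i ∈ Finset.range N, (((i:ℝ) + 1) * k) ^ (β - 1) := by
        rw [← Finset.sum_filter]
        refine Finset.sum_le_sum_of_subset_of_nonneg ?_ fun i _ _ =>
          Real.rpow_nonneg (by positivity) _
        intro i hi
        simp only [Finset.mem_filter, Finset.mem_range] at hi ⊢
        omega
      -- combine
      have hFm' : F m' = φ j := hFj
      have hker_sum : ∑ i ∈ Finset.range j,
            (if j - i ≤ N then (((j - i : ℕ) : ℝ) * k) ^ (β - 1) else 0)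
          ≤ ∑ i ∈ Finset.range N, (((i:ℝ) + 1) * k) ^ (β - 1) := by
        rw [hrefl]; exact hfilter
      have hφsum : ∑ i ∈ Finset.range j, φ i ≤ ∑ i ∈ Finset.range m', F i := by
        calc ∑ i ∈ Finset.range j, φ i ≤ ∑ i ∈ Finset.range j, F i :=
              Finset.sum_le_sum fun i _ => hFle i i le_rfl
          _ ≤ ∑ i ∈ Finset.range m', F i := by
              refine Finset.sum_le_sum_of_subset_of_nonneg
                (Finset.range_subset_range.mpr hjm) fun i _ _ => hF0 i
      -- the main chain
      have hchain : B * k * ∑ i ∈ Finset.range j, (((j - i : ℕ) : ℝ) * k) ^ (β - 1) * φ i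
          ≤ (1/2) * F m' + (q/2) * ∑ i ∈ Finset.range m', F i := by
        have hS : ∑ i ∈ Finset.range j, (((j - i : ℕ) : ℝ) * k) ^ (β - 1) * φ i
            ≤ (∑ i ∈ Finset.range N, (((i:ℝ) + 1) * k) ^ (β - 1)) * F m'
              + d ^ (β - 1) * ∑ i ∈ Finset.range m', F i := by
          refine le_trans hsum1 ?_
          have := mul_le_mul_of_nonneg_right hker_sum (hF0 m')
          have := mul_le_mul_of_nonneg_left hφsum hd1
          linarith
        have hBk : 0 ≤ B * k := by positivity
        have := mul_le_mul_of_nonneg_left hS hBk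
        have hterm1 : B * k * ((∑ i ∈ Finset.range N, (((i:ℝ) + 1) * k) ^ (β - 1)) * F m')
            ≤ (1/2) * F m' := by
          have h5 : B * (k * ∑ i ∈ Finset.range N, (((i:ℝ) + 1) * k) ^ (β - 1))
              ≤ B * (1 / (2 * B + 1)) := mul_le_mul_of_nonneg_left hnear hB
          have h6 : B * (1 / (2 * B + 1)) ≤ 1/2 := by
            rw [mul_one_div, div_le_iff₀ (by linarith : (0:ℝ) < 2 * B + 1)]
            linarith
          have h7 : 0 ≤ ∑ i ∈ Finset.range N, (((i:ℝ) + 1) * k) ^ (β - 1) :=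
            Finset.sum_nonneg fun i _ => Real.rpow_nonneg (by positivity) _
          nlinarith [hF0 m', mul_le_mul_of_nonneg_right (le_trans h5 h6) (hF0 m')]
        have hterm2 : B * k * (d ^ (β - 1) * ∑ i ∈ Finset.range m', F i)
            = (q/2) * ∑ i ∈ Finset.range m', F i := by
          rw [hqdef]; ring
        linarith
      rw [hFm'] at hchain ⊢
      linarith [hrecj, hchain]
    -- linear Gronwall for F
    have hgron := dg_lin_gronwall (2 * A) q F (by linarith) hq0 M key m hm
    have hφF : φ m ≤ F m := hFle m m le_rfl
    have hexp : (1 + q) ^ m ≤ Real.exp (2 * B * d ^ (β - 1) * T) := by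
      have h1 : (1 + q) ^ m ≤ Real.exp q ^ m :=
        pow_le_pow_left₀ (by positivity) (by linarith [Real.add_one_le_exp q]) m
      have h2 : Real.exp q ^ m = Real.exp ((m : ℝ) * q) := (Real.exp_nat_mul q m).symm
      have h3 : (m : ℝ) * q ≤ 2 * B * d ^ (β - 1) * T := by
        have hmk : (m : ℝ) * k ≤ T := by
          have : (m : ℝ) * k ≤ (M : ℝ) * k :=
            mul_le_mul_of_nonneg_right (Nat.cast_le.mpr hm) hk0.le
          linarith
        have : (m : ℝ) * q = 2 * B * d ^ (β - 1) * ((m : ℝ) * k) := by rw [hqdef]; ring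
        rw [this]
        exact mul_le_mul_of_nonneg_left hmk (by positivity)
      rw [h2] at h1
      exact le_trans h1 (Real.exp_le_exp.mpr h3)
    calc φ m ≤ 2 * A * (1 + q) ^ m := le_trans hφF hgron
      _ ≤ 2 * A * Real.exp (2 * B * d ^ (β - 1) * T) :=
          mul_le_mul_of_nonneg_left hexp (by linarith)
      _ = C2 * A := by rw [hC2def]; ring
      _ ≤ max C1 C2 * A := mul_le_mul_of_nonneg_right (le_max_right _ _) hA
end WeaklySingular
end
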